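/- arXiv:1603.00706 — 2 statements merged into one kernel-verified Lean document; each statement's English description precedes it below -/
import Mathlib

section
/- (Key linear-algebra inequality from the proof of Proposition 3.1, equation (3.3).) Let n ≥ 1, let S be a real symmetric positive semidefinite 2n×2n matrix, and let J be a real 2n×2n matrix with J² = -Id. Define the J-invariant part S^J := (1/2)(S + Jᵀ S J). Then S^J is symmetric positive semidefinite and det S ≤ 2^{2n-1} det(S^J). -/
open Matrix

section Aux

variable {ι : Type*} [Fintype ι] [DecidableEq ι]

lemma psd_det_nonneg {M : Matrix ι ι ℝ} (hM : M.PosSemidef) : 0 ≤ M.det := by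
  rw [hM.isHermitian.det_eq_prod_eigenvalues]
  exact Finset.prod_nonneg fun i _ => hM.eigenvalues_nonneg i

/-- If `M` and `1 - M` are PSD then `det M + det (1 - M) ≤ 1`. -/
lemma det_add_det_one_sub_le_one [Nonempty ι] {M : Matrix ι ι ℝ}
    (hM : M.PosSemidef) (hM' : (1 - M).PosSemidef) : M.det + (1 - M).det ≤ 1 := by
  classical
  have hH := hM.isHermitian
  set U : Matrix ι ι ℝ := (hH.eigenvectorUnitary : Matrix ι ι ℝ) with hU
  have hUU : star U * U = 1 := Unitary.coe_star_mul_self _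
  have hUU' : U * star U = 1 := Unitary.coe_mul_star_self _
  set lam : ι → ℝ := hH.eigenvalues with hlam
  have hdiag' : star U * M * U = diagonal lam := by
    have h := hH.conjStarAlgAut_star_eigenvectorUnitary
    rw [Unitary.conjStarAlgAut_apply] at h
    simpa [hU, hlam] using h
  have hconj : star U * (1 - M) * U = 1 - diagonal lam := by
    rw [mul_sub, sub_mul, mul_one, hUU, hdiag']
  have hpsd1 : (star U * (1 - M) * U).PosSemidef := by
    rw [Matrix.star_eq_conjTranspose]
    exact hM'.conjTranspose_mul_mul_same U
  rw [hconj] at hpsd1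
  have hdd : (1 : Matrix ι ι ℝ) - diagonal lam = diagonal (fun i => 1 - lam i) := by
    rw [← diagonal_one, diagonal_sub]
  rw [hdd] at hpsd1
  have hle1 : ∀ i, lam i ≤ 1 := by
    intro i
    have := (posSemidef_diagonal_iff.mp hpsd1) i
    linarith
  have hge0 : ∀ i, 0 ≤ lam i := hM.eigenvalues_nonneg
  have hdetU : U.det * (star U).det = 1 := by
    rw [← det_mul, hUU', det_one]
  have hdetM : M.det = ∏ i, lam i := hH.det_eq_prod_eigenvalues
  have hdetM' : (1 - M).det = ∏ i, (1 - lam i) := by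
    have hsU : (star U).det * U.det = 1 := by rw [← det_mul, hUU, det_one]
    have h1 : (1 - M).det = (star U * (1 - M) * U).det := by
      rw [det_mul, det_mul, mul_comm ((star U).det) ((1 - M).det), mul_assoc, hsU, mul_one]
    rw [h1, hconj, hdd, det_diagonal]
  obtain ⟨i0⟩ := (inferInstance : Nonempty ι)
  have h1 : ∏ i, lam i ≤ lam i0 := by
    rw [← Finset.prod_erase_mul _ _ (Finset.mem_univ i0)]
    calc (∏ i ∈ Finset.univ.erase i0, lam i) * lam i0
        ≤ 1 * lam i0 := by
          apply mul_le_mul_of_nonneg_right _ (hge0 i0)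
          exact Finset.prod_le_one (fun i _ => hge0 i) (fun i _ => hle1 i)
      _ = lam i0 := one_mul _
  have h2 : ∏ i, (1 - lam i) ≤ 1 - lam i0 := by
    rw [← Finset.prod_erase_mul _ _ (Finset.mem_univ i0)]
    calc (∏ i ∈ Finset.univ.erase i0, (1 - lam i)) * (1 - lam i0)
        ≤ 1 * (1 - lam i0) := by
          apply mul_le_mul_of_nonneg_right _ (by linarith [hle1 i0])
          exact Finset.prod_le_one (fun i _ => by linarith [hle1 i])
            (fun i _ => by linarith [hge0 i])
      _ = 1 - lam i0 := one_mul _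
  rw [hdetM, hdetM']
  linarith

/-- For PSD real matrices, `det A + det B ≤ det (A + B)`. -/
lemma det_add_det_le_det_add [Nonempty ι] {A B : Matrix ι ι ℝ}
    (hA : A.PosSemidef) (hB : B.PosSemidef) : A.det + B.det ≤ (A + B).det := by
  classical
  by_cases h : (A + B).det = 0
  · obtain ⟨x, hx0, hx⟩ := (Matrix.exists_mulVec_eq_zero_iff).mpr h
    have hsum : star x ⬝ᵥ A *ᵥ x + star x ⬝ᵥ B *ᵥ x = 0 := by
      have h0 : star x ⬝ᵥ (A + B) *ᵥ x = 0 := by rw [hx, dotProduct_zero]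
      rwa [add_mulVec, dotProduct_add] at h0
    have hAx : star x ⬝ᵥ A *ᵥ x = 0 := le_antisymm (by linarith [hB.dotProduct_mulVec_nonneg x]) (hA.dotProduct_mulVec_nonneg x)
    have hBx : star x ⬝ᵥ B *ᵥ x = 0 := by linarith
    have hdA : A.det = 0 :=
      Matrix.exists_mulVec_eq_zero_iff.mp ⟨x, hx0, (hA.dotProduct_mulVec_zero_iff x).mp hAx⟩
    have hdB : B.det = 0 :=
      Matrix.exists_mulVec_eq_zero_iff.mp ⟨x, hx0, (hB.dotProduct_mulVec_zero_iff x).mp hBx⟩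
    rw [hdA, hdB, h]; norm_num
  · have hC : (A + B).PosSemidef := hA.add hB
    set R : Matrix ι ι ℝ := (open MatrixOrder in CFC.sqrt (A + B)) with hRdef
    have hRpsd : R.PosSemidef := open MatrixOrder in (CFC.sqrt_nonneg (A + B)).posSemidef
    have hRR : R * R = A + B := open MatrixOrder in CFC.sqrt_mul_sqrt_self (A + B) hC.nonneg
    have hdetRR : R.det * R.det = (A + B).det := by rw [← det_mul, hRR]
    have hdetR : R.det ≠ 0 := by
      intro h0; rw [h0, mul_zero] at hdetRR; exact h hdetRR.symm
    have hRunit : IsUnit R.det := isUnit_iff_ne_zero.mpr hdetR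
    have hRinv : R⁻¹ * R = 1 := nonsing_inv_mul R hRunit
    have hRinv' : R * R⁻¹ = 1 := mul_nonsing_inv R hRunit
    have hRiH : (R⁻¹)ᴴ = R⁻¹ := by
      rw [conjTranspose_nonsing_inv, hRpsd.isHermitian.eq]
    have hsand : ∀ M : Matrix ι ι ℝ, R * (R⁻¹ * M * R⁻¹) * R = M := by
      intro M
      rw [show R * (R⁻¹ * M * R⁻¹) * R = (R * R⁻¹) * M * (R⁻¹ * R) by noncomm_ring,
        hRinv, hRinv', one_mul, mul_one]
    set A' : Matrix ι ι ℝ := R⁻¹ * A * R⁻¹ with hA'def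
    set B' : Matrix ι ι ℝ := R⁻¹ * B * R⁻¹ with hB'def
    have hA' : A'.PosSemidef := by
      have h1 := hA.conjTranspose_mul_mul_same (R⁻¹)
      rwa [hRiH] at h1
    have hB' : B'.PosSemidef := by
      have h1 := hB.conjTranspose_mul_mul_same (R⁻¹)
      rwa [hRiH] at h1
    have hsum : A' + B' = 1 := by
      rw [hA'def, hB'def,
        show R⁻¹ * A * R⁻¹ + R⁻¹ * B * R⁻¹ = R⁻¹ * (A + B) * R⁻¹ by noncomm_ring,
        ← hRR, show R⁻¹ * (R * R) * R⁻¹ = (R⁻¹ * R) * (R * R⁻¹) by noncomm_ring,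
        hRinv, hRinv', one_mul]
    have hB'eq : B' = 1 - A' := by rw [← hsum]; abel
    have hkey : A'.det + B'.det ≤ 1 := by
      have := det_add_det_one_sub_le_one hA' (by rw [← hB'eq]; exact hB')
      rwa [← hB'eq] at this
    have eA : A.det = R.det * A'.det * R.det := by
      conv_lhs => rw [← hsand A]
      rw [det_mul, det_mul]
    have eB : B.det = R.det * B'.det * R.det := by
      conv_lhs => rw [← hsand B]
      rw [det_mul, det_mul]
    have hpos : 0 < R.det * R.det := mul_self_pos.mpr hdetR
    calc A.det + B.det = (R.det * R.det) * (A'.det + B'.det) := by rw [eA, eB]; ring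
      _ ≤ (R.det * R.det) * 1 := mul_le_mul_of_nonneg_left hkey hpos.le
      _ = (A + B).det := by rw [mul_one, hdetRR]

end Aux

/-- **Equation (3.3): key linear-algebra inequality.** If `S` is a real symmetric positive
semidefinite `2n×2n` matrix and `J` is a real `2n×2n` matrix with `J² = -Id`, then the
`J`-invariant part `S^J := (1/2)(S + Jᵀ S J)` is symmetric positive semidefinite and
`det S ≤ 2^{2n-1} det(S^J)`. -/
theorem det_le_pow_det_J_invariant_part
    (n : ℕ) (hn : 1 ≤ n)
    (S J : Matrix (Fin (2*n)) (Fin (2*n)) ℝ)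
    (hS : S.PosSemidef)
    (hJ : J * J = -1) :
    ((1/2 : ℝ) • (S + Jᵀ * S * J)).PosSemidef ∧
      S.det ≤ 2^(2*n - 1) * ((1/2 : ℝ) • (S + Jᵀ * S * J)).det := by
  haveI : Nonempty (Fin (2*n)) := ⟨⟨0, by omega⟩⟩
  have hJT : Jᴴ = Jᵀ := conjTranspose_eq_transpose_of_trivial J
  have hB : (Jᵀ * S * J).PosSemidef := by
    have h1 := hS.conjTranspose_mul_mul_same J
    rwa [hJT] at h1
  have hM : (S + Jᵀ * S * J).PosSemidef := hS.add hB
  have hsm : ((1/2 : ℝ) • (S + Jᵀ * S * J)).PosSemidef := by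
    refine PosSemidef.of_dotProduct_mulVec_nonneg ?_ ?_
    · show _ᴴ = _
      rw [conjTranspose_smul, hM.isHermitian.eq, star_trivial]
    · intro x
      rw [smul_mulVec, dotProduct_smul, smul_eq_mul]
      have := hM.dotProduct_mulVec_nonneg x
      positivity
  refine ⟨hsm, ?_⟩
  -- determinant of J squared is one
  have hdetJ : J.det * J.det = 1 := by
    have h1 := congrArg Matrix.det hJ
    rw [det_mul] at h1
    rw [h1, det_neg, det_one, Fintype.card_fin, mul_one]
    exact (even_two_mul n).neg_one_pow
  have hdetB : (Jᵀ * S * J).det = S.det := by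
    rw [det_mul, det_mul, det_transpose, mul_comm J.det S.det, mul_assoc, hdetJ, mul_one]
  have hkey : S.det + S.det ≤ (S + Jᵀ * S * J).det := by
    have := det_add_det_le_det_add hS hB
    rwa [hdetB] at this
  rw [det_smul, Fintype.card_fin]
  have hco : (2:ℝ)^(2*n-1) * (1/2:ℝ)^(2*n) = 1/2 := by
    obtain ⟨m, hm⟩ : ∃ m, 2*n = m + 1 := ⟨2*n - 1, by omega⟩
    have hm' : 2*n - 1 = m := by omega
    rw [hm', hm, pow_succ]
    calc (2:ℝ)^m * ((1/2:ℝ)^m * (1/2)) = ((2:ℝ) * (1/2))^m * (1/2) := by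
          rw [mul_pow]; ring
      _ = 1/2 := by norm_num
  calc S.det ≤ (1/2 : ℝ) * (S + Jᵀ * S * J).det := by linarith
    _ = 2^(2*n-1) * ((1/2:ℝ)^(2*n) * (S + Jᵀ * S * J).det) := by rw [← mul_assoc, hco]
end

section
/- (First derivative of the largest eigenvalue; first formula of the Lemma containing equation (5.9).) Let m ≥ 1 and define f : M_m(ℝ) → ℝ by f(B) := sup { xᵀ B x : x ∈ ℝ^m, ‖x‖ = 1 }, so that for symmetric B, f(B) is the largest eigenvalue of B. Let A be a real symmetric m×m matrix whose largest eigenvalue λ₁ is simple (its eigenspace is one-dimensional), and let V ∈ ℝ^m be a unit eigenvector of A with eigenvalue λ₁. Then f is Fréchet differentiable at A, with derivative the linear map H ↦ Vᵀ H V. -/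
open Matrix

/-- The largest-eigenvalue function `f(B) = sup { xᵀ B x : ‖x‖ = 1 }` on real `m×m`
matrices (for symmetric `B` this is the largest eigenvalue of `B`). -/
noncomputable def lamMax {m : ℕ} (B : Matrix (Fin m) (Fin m) ℝ) : ℝ :=
  sSup { r : ℝ | ∃ x : Fin m → ℝ, (∑ i, (x i)^2) = 1 ∧ r = x ⬝ᵥ B *ᵥ x }

attribute [local instance] Matrix.normedAddCommGroup Matrix.normedSpace

namespace LamMaxAux

variable {m : ℕ}

/-- entrywise 1-norm -/
noncomputable def Nmat (B : Matrix (Fin m) (Fin m) ℝ) : ℝ := ∑ i, ∑ j, |B i j|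

lemma Nmat_nonneg (B : Matrix (Fin m) (Fin m) ℝ) : 0 ≤ Nmat B := by
  unfold Nmat; positivity

lemma dot_self_eq_sum_sq (x : Fin m → ℝ) : x ⬝ᵥ x = ∑ i, (x i)^2 := by
  simp [dotProduct, sq]

lemma dot_self_nonneg (x : Fin m → ℝ) : 0 ≤ x ⬝ᵥ x := by
  rw [dot_self_eq_sum_sq]; positivity

lemma dot_self_eq_zero_iff (x : Fin m → ℝ) : x ⬝ᵥ x = 0 ↔ x = 0 := by
  rw [dot_self_eq_sum_sq]
  constructor
  · intro h
    funext i
    have h1 : ∀ j ∈ Finset.univ, (0:ℝ) ≤ (x j)^2 := fun j _ => sq_nonneg _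
    have := (Finset.sum_eq_zero_iff_of_nonneg h1).1 h i (Finset.mem_univ i)
    simpa [pow_eq_zero_iff] using this
  · intro h; simp [h]

lemma abs_apply_le_sqrt (x : Fin m → ℝ) (i : Fin m) : |x i| ≤ Real.sqrt (x ⬝ᵥ x) := by
  have h1 : (x i)^2 ≤ x ⬝ᵥ x := by
    rw [dot_self_eq_sum_sq]
    exact Finset.single_le_sum (fun j _ => sq_nonneg (x j)) (Finset.mem_univ i)
  calc |x i| = Real.sqrt ((x i)^2) := (Real.sqrt_sq_eq_abs _).symm
    _ ≤ _ := Real.sqrt_le_sqrt h1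

lemma dot_bound (B : Matrix (Fin m) (Fin m) ℝ) (a b : Fin m → ℝ) :
    |a ⬝ᵥ B *ᵥ b| ≤ Nmat B * (Real.sqrt (a ⬝ᵥ a) * Real.sqrt (b ⬝ᵥ b)) := by
  have h1 : a ⬝ᵥ B *ᵥ b = ∑ i, ∑ j, a i * (B i j * b j) := by
    simp [dotProduct, Matrix.mulVec, Finset.mul_sum]
  rw [h1]
  calc |∑ i, ∑ j, a i * (B i j * b j)|
      ≤ ∑ i, |∑ j, a i * (B i j * b j)| := Finset.abs_sum_le_sum_abs _ _
    _ ≤ ∑ i, ∑ j, |a i * (B i j * b j)| :=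
        Finset.sum_le_sum fun i _ => Finset.abs_sum_le_sum_abs _ _
    _ ≤ ∑ i, ∑ j, |B i j| * (Real.sqrt (a ⬝ᵥ a) * Real.sqrt (b ⬝ᵥ b)) := by
        refine Finset.sum_le_sum fun i _ => Finset.sum_le_sum fun j _ => ?_
        rw [abs_mul, abs_mul]
        have ha := abs_apply_le_sqrt a i
        have hb := abs_apply_le_sqrt b j
        calc |a i| * (|B i j| * |b j|) = |B i j| * (|a i| * |b j|) := by ring
          _ ≤ |B i j| * (Real.sqrt (a ⬝ᵥ a) * Real.sqrt (b ⬝ᵥ b)) := by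
              apply mul_le_mul_of_nonneg_left _ (abs_nonneg _)
              exact mul_le_mul ha hb (abs_nonneg _) (Real.sqrt_nonneg _)
    _ = Nmat B * (Real.sqrt (a ⬝ᵥ a) * Real.sqrt (b ⬝ᵥ b)) := by
        rw [Nmat, Finset.sum_mul]
        exact Finset.sum_congr rfl fun i _ => (Finset.sum_mul _ _ _).symm

lemma symm_dot {A : Matrix (Fin m) (Fin m) ℝ} (hA : A.IsSymm) (v u : Fin m → ℝ) :
    v ⬝ᵥ A *ᵥ u = (A *ᵥ v) ⬝ᵥ u := by
  rw [Matrix.dotProduct_mulVec, ← Matrix.mulVec_transpose, hA.eq]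

lemma cont_quad (B : Matrix (Fin m) (Fin m) ℝ) :
    Continuous fun w : Fin m → ℝ => w ⬝ᵥ B *ᵥ w := by
  simp only [dotProduct, Matrix.mulVec]
  exact continuous_finset_sum _ fun i _ =>
    (continuous_apply i).mul (continuous_finset_sum _ fun j _ =>
      continuous_const.mul (continuous_apply j))

lemma cont_dot (V : Fin m → ℝ) : Continuous fun w : Fin m → ℝ => V ⬝ᵥ w := by
  simp only [dotProduct]
  exact continuous_finset_sum _ fun i _ => continuous_const.mul (continuous_apply i)

lemma cont_dot_self : Continuous fun w : Fin m → ℝ => w ⬝ᵥ w := by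
  simp only [dotProduct]
  exact continuous_finset_sum _ fun i _ => (continuous_apply i).mul (continuous_apply i)


lemma gap (A : Matrix (Fin m) (Fin m) ℝ) (hA : A.IsSymm)
    (lam1 : ℝ) (V : Fin m → ℝ) (hVV : V ⬝ᵥ V = 1)
    (hVeig : A *ᵥ V = lam1 • V)
    (hmax : ∀ lam : ℝ, (∃ v : Fin m → ℝ, v ≠ 0 ∧ A *ᵥ v = lam • v) → lam ≤ lam1)
    (hsimple : ∀ w : Fin m → ℝ, A *ᵥ w = lam1 • w → ∃ c : ℝ, w = c • V) :
    ∃ δ : ℝ, 0 < δ ∧ ∀ w : Fin m → ℝ, V ⬝ᵥ w = 0 →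
      w ⬝ᵥ A *ᵥ w ≤ (lam1 - δ) * (w ⬝ᵥ w) := by
  -- reduce to the unit sphere
  suffices hunit : ∃ δ : ℝ, 0 < δ ∧ ∀ w : Fin m → ℝ, V ⬝ᵥ w = 0 → w ⬝ᵥ w = 1 →
      w ⬝ᵥ A *ᵥ w ≤ lam1 - δ by
    obtain ⟨δ, hδ, h⟩ := hunit
    refine ⟨δ, hδ, fun w hwV => ?_⟩
    rcases eq_or_ne w 0 with rfl | hw0
    · simp
    · have hs : 0 < w ⬝ᵥ w :=
        lt_of_le_of_ne (dot_self_nonneg w) (fun h' => hw0 ((dot_self_eq_zero_iff w).1 h'.symm))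
      have hsq : Real.sqrt (w ⬝ᵥ w) * Real.sqrt (w ⬝ᵥ w) = w ⬝ᵥ w := Real.mul_self_sqrt hs.le
      have hsqpos : 0 < Real.sqrt (w ⬝ᵥ w) := Real.sqrt_pos.2 hs
      set c : ℝ := (Real.sqrt (w ⬝ᵥ w))⁻¹ with hc
      have hcc : c * c * (w ⬝ᵥ w) = 1 := by
        rw [hc, ← mul_inv, hsq]
        exact inv_mul_cancel₀ hs.ne'
      have h1 : (c • w) ⬝ᵥ (c • w) = 1 := by
        rw [smul_dotProduct, dotProduct_smul, smul_eq_mul, smul_eq_mul, ← mul_assoc]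
        exact hcc
      have h2 : V ⬝ᵥ (c • w) = 0 := by rw [dotProduct_smul, hwV, smul_zero]
      have h3 := h (c • w) h2 h1
      have h4 : (c • w) ⬝ᵥ A *ᵥ (c • w) = c * c * (w ⬝ᵥ A *ᵥ w) := by
        rw [Matrix.mulVec_smul, smul_dotProduct, dotProduct_smul, smul_eq_mul, smul_eq_mul]
        ring
      rw [h4] at h3
      have h5 : (w ⬝ᵥ w) * (c * c * (w ⬝ᵥ A *ᵥ w)) ≤ (w ⬝ᵥ w) * (lam1 - δ) :=
        mul_le_mul_of_nonneg_left h3 hs.le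
      have h6 : (w ⬝ᵥ w) * (c * c * (w ⬝ᵥ A *ᵥ w)) = w ⬝ᵥ A *ᵥ w := by
        rw [show (w ⬝ᵥ w) * (c * c * (w ⬝ᵥ A *ᵥ w)) = (c * c * (w ⬝ᵥ w)) * (w ⬝ᵥ A *ᵥ w) by ring,
          hcc, one_mul]
      rw [h6] at h5
      linarith
  -- unit sphere case
  set S : Set (Fin m → ℝ) := {w | w ⬝ᵥ w = 1 ∧ V ⬝ᵥ w = 0} with hS
  by_cases hSne : S.Nonempty
  · -- compactness
    have hclosed : IsClosed S := by
      have h1 : IsClosed {w : Fin m → ℝ | w ⬝ᵥ w = 1} := isClosed_eq cont_dot_self continuous_const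
      have h2 : IsClosed {w : Fin m → ℝ | V ⬝ᵥ w = 0} := isClosed_eq (cont_dot V) continuous_const
      exact h1.inter h2
    have hsub : S ⊆ Metric.closedBall 0 1 := by
      rintro w ⟨hw1, -⟩
      rw [Metric.mem_closedBall, dist_zero_right]
      rw [pi_norm_le_iff_of_nonneg zero_le_one]
      intro i
      have := abs_apply_le_sqrt w i
      rw [hw1, Real.sqrt_one] at this
      simpa [Real.norm_eq_abs] using this
    have hcomp : IsCompact S :=
      (isCompact_closedBall (0 : Fin m → ℝ) 1).of_isClosed_subset hclosed hsub
    obtain ⟨w₀, hw₀S, hmaxon⟩ := hcomp.exists_isMaxOn hSne (cont_quad A).continuousOn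
    obtain ⟨hw01, hw0V⟩ := hw₀S
    -- abbreviate z
    have hwz : ∃ z : Fin m → ℝ, z = A *ᵥ w₀ - (w₀ ⬝ᵥ A *ᵥ w₀) • w₀ := ⟨_, rfl⟩
    obtain ⟨z, hzdef⟩ := hwz
    have hw0z : w₀ ⬝ᵥ z = 0 := by
      rw [hzdef, dotProduct_sub, dotProduct_smul, hw01, smul_eq_mul, mul_one, sub_self]
    have hVz : V ⬝ᵥ z = 0 := by
      rw [hzdef, dotProduct_sub, symm_dot hA, hVeig, smul_dotProduct, hw0V, dotProduct_smul,
        hw0V, smul_eq_mul, smul_eq_mul, mul_zero, mul_zero, sub_self]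
    have hAw0 : A *ᵥ w₀ = z + (w₀ ⬝ᵥ A *ᵥ w₀) • w₀ := by rw [hzdef, sub_add_cancel]
    have hzAw0 : z ⬝ᵥ A *ᵥ w₀ = z ⬝ᵥ z := by
      rw [hAw0, dotProduct_add, dotProduct_smul, dotProduct_comm z w₀, hw0z, smul_eq_mul,
        mul_zero, add_zero]
    have hz0 : z = 0 := by
      by_contra hne
      have hs : 0 < z ⬝ᵥ z :=
        lt_of_le_of_ne (dot_self_nonneg z) (fun h' => hne ((dot_self_eq_zero_iff z).1 h'.symm))
      have key : ∀ t : ℝ, 0 < t →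
          2 * (z ⬝ᵥ z) ≤ t * ((w₀ ⬝ᵥ A *ᵥ w₀) * (z ⬝ᵥ z) - z ⬝ᵥ A *ᵥ z) := by
        intro t ht
        have hy : (w₀ + t • z) ⬝ᵥ (w₀ + t • z) = 1 + t^2 * (z ⬝ᵥ z) := by
          rw [dotProduct_add, add_dotProduct, add_dotProduct, dotProduct_smul, smul_dotProduct,
            smul_dotProduct, dotProduct_smul, hw01, hw0z, dotProduct_comm z w₀, hw0z]
          simp only [smul_eq_mul]
          ring
        have hr : 0 < 1 + t^2 * (z ⬝ᵥ z) := by positivity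
        have hsq : Real.sqrt (1 + t^2 * (z ⬝ᵥ z)) * Real.sqrt (1 + t^2 * (z ⬝ᵥ z))
            = 1 + t^2 * (z ⬝ᵥ z) := Real.mul_self_sqrt hr.le
        set c : ℝ := (Real.sqrt (1 + t^2 * (z ⬝ᵥ z)))⁻¹ with hc
        have hcc : c * c * (1 + t^2 * (z ⬝ᵥ z)) = 1 := by
          rw [hc, ← mul_inv, hsq]
          exact inv_mul_cancel₀ hr.ne'
        have hu1 : (c • (w₀ + t • z)) ⬝ᵥ (c • (w₀ + t • z)) = 1 := by
          rw [smul_dotProduct, dotProduct_smul, smul_eq_mul, smul_eq_mul, hy, ← mul_assoc]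
          exact hcc
        have hu2 : V ⬝ᵥ (c • (w₀ + t • z)) = 0 := by
          rw [dotProduct_smul, dotProduct_add, dotProduct_smul, hVz, hw0V]
          simp
        have hle : (c • (w₀ + t • z)) ⬝ᵥ A *ᵥ (c • (w₀ + t • z)) ≤ w₀ ⬝ᵥ A *ᵥ w₀ :=
          hmaxon (⟨hu1, hu2⟩ : c • (w₀ + t • z) ∈ S)
        have h1 : w₀ ⬝ᵥ A *ᵥ z = z ⬝ᵥ z := by
          rw [symm_dot hA, dotProduct_comm, hzAw0]
        have hyA : (w₀ + t • z) ⬝ᵥ A *ᵥ (w₀ + t • z)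
            = w₀ ⬝ᵥ A *ᵥ w₀ + 2 * t * (z ⬝ᵥ z) + t^2 * (z ⬝ᵥ A *ᵥ z) := by
          rw [mulVec_add, Matrix.mulVec_smul, dotProduct_add, add_dotProduct, add_dotProduct,
            dotProduct_smul, smul_dotProduct, smul_dotProduct, dotProduct_smul, h1, hzAw0]
          simp only [smul_eq_mul]
          ring
        have huA : (c • (w₀ + t • z)) ⬝ᵥ A *ᵥ (c • (w₀ + t • z))
            = c * c * ((w₀ + t • z) ⬝ᵥ A *ᵥ (w₀ + t • z)) := by
          rw [Matrix.mulVec_smul, smul_dotProduct, dotProduct_smul, smul_eq_mul, smul_eq_mul]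
          ring
        rw [huA, hyA] at hle
        have h5 : (1 + t^2 * (z ⬝ᵥ z)) *
              (c * c * (w₀ ⬝ᵥ A *ᵥ w₀ + 2 * t * (z ⬝ᵥ z) + t^2 * (z ⬝ᵥ A *ᵥ z)))
            ≤ (1 + t^2 * (z ⬝ᵥ z)) * (w₀ ⬝ᵥ A *ᵥ w₀) :=
          mul_le_mul_of_nonneg_left hle hr.le
        have h6 : (1 + t^2 * (z ⬝ᵥ z)) *
              (c * c * (w₀ ⬝ᵥ A *ᵥ w₀ + 2 * t * (z ⬝ᵥ z) + t^2 * (z ⬝ᵥ A *ᵥ z)))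
            = w₀ ⬝ᵥ A *ᵥ w₀ + 2 * t * (z ⬝ᵥ z) + t^2 * (z ⬝ᵥ A *ᵥ z) := by
          rw [show (1 + t^2 * (z ⬝ᵥ z)) *
              (c * c * (w₀ ⬝ᵥ A *ᵥ w₀ + 2 * t * (z ⬝ᵥ z) + t^2 * (z ⬝ᵥ A *ᵥ z)))
              = (c * c * (1 + t^2 * (z ⬝ᵥ z))) *
                (w₀ ⬝ᵥ A *ᵥ w₀ + 2 * t * (z ⬝ᵥ z) + t^2 * (z ⬝ᵥ A *ᵥ z)) by ring, hcc, one_mul]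
        rw [h6] at h5
        -- h5 : μ + 2t s + t² q ≤ (1 + t² s) μ ; so  t*(2s) ≤ t*(t*(μ s - q))
        have h8 : t * (2 * (z ⬝ᵥ z)) ≤
            t * (t * ((w₀ ⬝ᵥ A *ᵥ w₀) * (z ⬝ᵥ z) - z ⬝ᵥ A *ᵥ z)) := by nlinarith [h5]
        exact le_of_mul_le_mul_left h8 ht
      rcases le_or_gt ((w₀ ⬝ᵥ A *ᵥ w₀) * (z ⬝ᵥ z) - z ⬝ᵥ A *ᵥ z) 0 with hb | hb
      · have h9 := key 1 one_pos
        nlinarith [h9, hs, hb]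
      · have h9 := key ((z ⬝ᵥ z) / ((w₀ ⬝ᵥ A *ᵥ w₀) * (z ⬝ᵥ z) - z ⬝ᵥ A *ᵥ z))
          (by positivity)
        rw [div_mul_cancel₀ _ (ne_of_gt hb)] at h9
        linarith
    have heig : A *ᵥ w₀ = (w₀ ⬝ᵥ A *ᵥ w₀) • w₀ := by
      have := sub_eq_zero.mp (hzdef ▸ hz0)
      exact this
    have hw0ne : w₀ ≠ 0 := by
      intro h
      rw [h] at hw01
      simp at hw01
    have hμle : w₀ ⬝ᵥ A *ᵥ w₀ ≤ lam1 := hmax _ ⟨w₀, hw0ne, heig⟩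
    have hμlt : w₀ ⬝ᵥ A *ᵥ w₀ < lam1 := by
      rcases lt_or_eq_of_le hμle with h | h
      · exact h
      · exfalso
        obtain ⟨c, hc⟩ := hsimple w₀ (by rw [heig, h])
        have hVw0c : V ⬝ᵥ w₀ = c := by rw [hc, dotProduct_smul, hVV, smul_eq_mul, mul_one]
        rw [hw0V] at hVw0c
        rw [hc, ← hVw0c] at hw01
        simp at hw01
    refine ⟨lam1 - w₀ ⬝ᵥ A *ᵥ w₀, by linarith, fun w hwV hw1 => ?_⟩
    have := hmaxon (⟨hw1, hwV⟩ : w ∈ S)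
    simp only [sub_sub_cancel]
    exact this
  · -- S empty: vacuous
    refine ⟨1, one_pos, fun w hwV hw1 => ?_⟩
    exact absurd ⟨hw1, hwV⟩ (fun h => hSne ⟨w, h⟩)


set_option maxHeartbeats 1000000 in
lemma elem_bound (A : Matrix (Fin m) (Fin m) ℝ) (hA : A.IsSymm)
    (lam1 : ℝ) (V : Fin m → ℝ) (hVV : V ⬝ᵥ V = 1)
    (hVeig : A *ᵥ V = lam1 • V)
    (δ : ℝ) (hδ : 0 < δ)
    (hgap : ∀ w : Fin m → ℝ, V ⬝ᵥ w = 0 → w ⬝ᵥ A *ᵥ w ≤ (lam1 - δ) * (w ⬝ᵥ w))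
    (H : Matrix (Fin m) (Fin m) ℝ) (y : Fin m → ℝ)
    (hy : y ⬝ᵥ y = 1) (hα0 : 0 ≤ V ⬝ᵥ y) :
    y ⬝ᵥ (A + H) *ᵥ y ≤ lam1 + V ⬝ᵥ H *ᵥ V + 2 * (Nmat H)^2 / δ := by
  obtain ⟨α, hαdef⟩ : ∃ a : ℝ, a = V ⬝ᵥ y := ⟨_, rfl⟩
  rw [← hαdef] at hα0
  have hα2 : α^2 ≤ 1 := by
    have hCS := Finset.sum_mul_sq_le_sq_mul_sq Finset.univ V y
    have h1 : V ⬝ᵥ y = ∑ i, V i * y i := rfl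
    have h2 : (∑ i, (V i)^2) = 1 := by rw [← dot_self_eq_sum_sq, hVV]
    have h3 : (∑ i, (y i)^2) = 1 := by rw [← dot_self_eq_sum_sq, hy]
    rw [h2, h3, one_mul] at hCS
    rw [hαdef, h1]
    exact hCS
  have hα1 : α ≤ 1 := by nlinarith
  have hyV : y ⬝ᵥ V = α := by rw [dotProduct_comm, ← hαdef]
  have hwV : V ⬝ᵥ (y - α • V) = 0 := by
    rw [dotProduct_sub, dotProduct_smul, hVV, ← hαdef, smul_eq_mul, mul_one, sub_self]
  have hww : (y - α • V) ⬝ᵥ (y - α • V) = 1 - α^2 := by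
    simp only [dotProduct_sub, sub_dotProduct, dotProduct_smul, smul_dotProduct, smul_eq_mul,
      hy, hVV, hyV, ← hαdef]
    ring
  have hgw := hgap (y - α • V) hwV
  rw [hww] at hgw
  have hAVV : V ⬝ᵥ A *ᵥ V = lam1 := by
    rw [hVeig, dotProduct_smul, hVV, smul_eq_mul, mul_one]
  have hcross1 : V ⬝ᵥ A *ᵥ (y - α • V) = 0 := by
    rw [symm_dot hA, hVeig, smul_dotProduct, smul_eq_mul, hwV, mul_zero]
  have hcross2 : (y - α • V) ⬝ᵥ A *ᵥ V = 0 := by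
    rw [hVeig, dotProduct_smul, smul_eq_mul, dotProduct_comm, hwV, mul_zero]
  have hyd : y = α • V + (y - α • V) := by
    funext i
    simp only [Pi.add_apply, Pi.sub_apply, Pi.smul_apply, smul_eq_mul]
    ring
  have hyA : y ⬝ᵥ A *ᵥ y = lam1 * α^2 + (y - α • V) ⬝ᵥ A *ᵥ (y - α • V) := by
    calc y ⬝ᵥ A *ᵥ y = (α • V + (y - α • V)) ⬝ᵥ A *ᵥ (α • V + (y - α • V)) := by rw [← hyd]
      _ = lam1 * α^2 + (y - α • V) ⬝ᵥ A *ᵥ (y - α • V) := by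
          simp only [mulVec_add, Matrix.mulVec_smul, dotProduct_add, add_dotProduct,
            dotProduct_smul, smul_dotProduct, smul_eq_mul, hAVV, hcross1, hcross2]
          ring
  -- H part
  have hident : y ⬝ᵥ H *ᵥ y - V ⬝ᵥ H *ᵥ V = (y - V) ⬝ᵥ H *ᵥ y + V ⬝ᵥ H *ᵥ (y - V) := by
    rw [sub_dotProduct, mulVec_sub, dotProduct_sub]
    ring
  have hd : (y - V) ⬝ᵥ (y - V) = 2 - 2*α := by
    simp only [dotProduct_sub, sub_dotProduct, hy, hVV, hyV, ← hαdef]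
    ring
  have hb1 := dot_bound H (y - V) y
  rw [hd, hy, Real.sqrt_one, mul_one] at hb1
  have hb2 := dot_bound H V (y - V)
  rw [hd, hVV, Real.sqrt_one, one_mul] at hb2
  have hsq2 : Real.sqrt (2 - 2*α) ≤ Real.sqrt 2 * Real.sqrt (1 - α^2) := by
    rw [← Real.sqrt_mul (by norm_num : (0:ℝ) ≤ 2)]
    exact Real.sqrt_le_sqrt (by nlinarith)
  have hHdiff : |y ⬝ᵥ H *ᵥ y - V ⬝ᵥ H *ᵥ V|
      ≤ 2 * Nmat H * (Real.sqrt 2 * Real.sqrt (1 - α^2)) := by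
    rw [hident]
    calc |(y - V) ⬝ᵥ H *ᵥ y + V ⬝ᵥ H *ᵥ (y - V)|
        ≤ |(y - V) ⬝ᵥ H *ᵥ y| + |V ⬝ᵥ H *ᵥ (y - V)| := abs_add_le _ _
      _ ≤ Nmat H * Real.sqrt (2 - 2*α) + Nmat H * Real.sqrt (2 - 2*α) := add_le_add hb1 hb2
      _ ≤ 2 * Nmat H * (Real.sqrt 2 * Real.sqrt (1 - α^2)) := by
          nlinarith [hsq2, Nmat_nonneg H, Real.sqrt_nonneg (2 - 2*α)]
  have ht2 : (Real.sqrt (1 - α^2))^2 = 1 - α^2 := Real.sq_sqrt (by nlinarith)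
  have ht0 : 0 ≤ Real.sqrt (1 - α^2) := Real.sqrt_nonneg _
  have hA_le : y ⬝ᵥ A *ᵥ y ≤ lam1 * α^2 + (lam1 - δ) * (1 - α^2) := by
    rw [hyA]; linarith
  have hH_le : y ⬝ᵥ H *ᵥ y ≤ V ⬝ᵥ H *ᵥ V
      + 2 * Nmat H * (Real.sqrt 2 * Real.sqrt (1 - α^2)) := by
    have := le_of_abs_le hHdiff
    linarith
  have hexpand : y ⬝ᵥ (A + H) *ᵥ y = y ⬝ᵥ A *ᵥ y + y ⬝ᵥ H *ᵥ y := by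
    rw [add_mulVec, dotProduct_add]
  have hmain0 : 2 * Nmat H * (Real.sqrt 2 * Real.sqrt (1 - α^2)) - δ * (Real.sqrt (1 - α^2))^2
      ≤ 2 * (Nmat H)^2 / δ := by
    rw [le_div_iff₀ hδ]
    nlinarith [sq_nonneg (δ * Real.sqrt (1 - α^2) - Real.sqrt 2 * Nmat H),
      Real.sq_sqrt (by norm_num : (0:ℝ) ≤ 2), sq_nonneg (Nmat H), hδ, ht0, Nmat_nonneg H]
  rw [ht2] at hmain0
  rw [hexpand]
  linarith [hA_le, hH_le, hmain0]


lemma bddAbove_spec (B : Matrix (Fin m) (Fin m) ℝ) :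
    BddAbove { r : ℝ | ∃ x : Fin m → ℝ, (∑ i, (x i)^2) = 1 ∧ r = x ⬝ᵥ B *ᵥ x } := by
  refine ⟨Nmat B, ?_⟩
  rintro r ⟨x, hx, rfl⟩
  have hxx : x ⬝ᵥ x = 1 := by rw [dot_self_eq_sum_sq]; exact hx
  have hb := dot_bound B x x
  rw [hxx, Real.sqrt_one, mul_one, mul_one] at hb
  exact (le_abs_self _).trans hb

end LamMaxAux

open LamMaxAux

/-- **First formula of the Lemma containing (5.9): first derivative of the largest
eigenvalue.** If the largest eigenvalue `lam1` of the real symmetric matrix `A` is simple,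
with a unit eigenvector `V`, then `lamMax` is Fréchet differentiable at `A` with derivative
`H ↦ Vᵀ H V`. -/
theorem lamMax_hasFDerivAt
    (m : ℕ) (hm : 1 ≤ m)
    (A : Matrix (Fin m) (Fin m) ℝ) (hA : A.IsSymm)
    (lam1 : ℝ) (V : Fin m → ℝ)
    (hVunit : (∑ i, (V i)^2) = 1)
    (hVeig : A *ᵥ V = lam1 • V)
    (hmax : ∀ lam : ℝ, (∃ v : Fin m → ℝ, v ≠ 0 ∧ A *ᵥ v = lam • v) → lam ≤ lam1)
    (hsimple : ∀ w : Fin m → ℝ, A *ᵥ w = lam1 • w → ∃ c : ℝ, w = c • V) :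
    ∃ L : Matrix (Fin m) (Fin m) ℝ →L[ℝ] ℝ,
      (∀ H : Matrix (Fin m) (Fin m) ℝ, L H = V ⬝ᵥ H *ᵥ V) ∧
      HasFDerivAt lamMax L A := by
  have hVV : V ⬝ᵥ V = 1 := by rw [dot_self_eq_sum_sq]; exact hVunit
  obtain ⟨δ, hδ, hgap⟩ := gap A hA lam1 V hVV hVeig hmax hsimple
  have hAVV : V ⬝ᵥ A *ᵥ V = lam1 := by
    rw [hVeig, dotProduct_smul, hVV, smul_eq_mul, mul_one]
  -- upper bound
  have upper : ∀ H : Matrix (Fin m) (Fin m) ℝ,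
      lamMax (A + H) ≤ lam1 + V ⬝ᵥ H *ᵥ V + 2 * (Nmat H)^2 / δ := by
    intro H
    unfold lamMax
    refine csSup_le ⟨V ⬝ᵥ (A + H) *ᵥ V, V, hVunit, rfl⟩ ?_
    rintro r ⟨x, hx, rfl⟩
    have hxx : x ⬝ᵥ x = 1 := by rw [dot_self_eq_sum_sq]; exact hx
    rcases le_or_gt 0 (V ⬝ᵥ x) with h | h
    · exact elem_bound A hA lam1 V hVV hVeig δ hδ hgap H x hxx h
    · have hnx : (-x) ⬝ᵥ (-x) = 1 := by
        rw [neg_dotProduct, dotProduct_neg, neg_neg, hxx]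
      have hVnx : 0 ≤ V ⬝ᵥ (-x) := by
        rw [dotProduct_neg]; linarith
      have hb := elem_bound A hA lam1 V hVV hVeig δ hδ hgap H (-x) hnx hVnx
      rw [Matrix.mulVec_neg, neg_dotProduct, dotProduct_neg, neg_neg] at hb
      exact hb
  -- lower bound
  have lower : ∀ H : Matrix (Fin m) (Fin m) ℝ,
      lam1 + V ⬝ᵥ H *ᵥ V ≤ lamMax (A + H) := by
    intro H
    unfold lamMax
    apply le_csSup (bddAbove_spec (A + H))
    exact ⟨V, hVunit, by rw [add_mulVec, dotProduct_add, hAVV]⟩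
  -- value at A
  have hNz : Nmat (0 : Matrix (Fin m) (Fin m) ℝ) = 0 := by simp [Nmat]
  have hfA : lamMax A = lam1 := by
    have h1 := upper 0
    have h2 := lower 0
    simp only [add_zero, Matrix.zero_mulVec, dotProduct_zero, hNz] at h1 h2
    norm_num at h1
    linarith
  -- the derivative
  set L₀ : Matrix (Fin m) (Fin m) ℝ →ₗ[ℝ] ℝ :=
    { toFun := fun H => V ⬝ᵥ H *ᵥ V
      map_add' := fun H K => by simp [Matrix.add_mulVec, dotProduct_add]
      map_smul' := fun c H => by
        simp [Matrix.smul_mulVec, dotProduct_smul] } with hL₀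
  refine ⟨LinearMap.toContinuousLinearMap L₀, fun H => rfl, ?_⟩
  refine hasFDerivAt_iff_isLittleO_nhds_zero.2 ?_
  have hNle : ∀ H : Matrix (Fin m) (Fin m) ℝ, Nmat H ≤ (m:ℝ)^2 * ‖H‖ := by
    intro H
    calc Nmat H = ∑ i, ∑ j, |H i j| := rfl
      _ ≤ ∑ _i : Fin m, ∑ _j : Fin m, ‖H‖ := by
          refine Finset.sum_le_sum fun i _ => Finset.sum_le_sum fun j _ => ?_
          have := Matrix.norm_entry_le_entrywise_sup_norm H (i := i) (j := j)
          rwa [Real.norm_eq_abs] at this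
      _ = (m:ℝ)^2 * ‖H‖ := by
          simp [Finset.sum_const, Finset.card_univ, nsmul_eq_mul]
          ring
  have hC0 : 0 ≤ 2 * (m:ℝ)^4 / δ := by positivity
  have herr : ∀ H : Matrix (Fin m) (Fin m) ℝ,
      ‖lamMax (A + H) - lamMax A - (LinearMap.toContinuousLinearMap L₀) H‖
        ≤ (2 * (m:ℝ)^4 / δ) * ‖H‖^2 := by
    intro H
    have h1 := upper H
    have h2 := lower H
    have hLH : (LinearMap.toContinuousLinearMap L₀) H = V ⬝ᵥ H *ᵥ V := rfl
    rw [hLH, hfA, Real.norm_eq_abs]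
    have hNH : (Nmat H)^2 ≤ ((m:ℝ)^2 * ‖H‖)^2 :=
      pow_le_pow_left₀ (Nmat_nonneg H) (hNle H) 2
    have hkey : 2 * (Nmat H)^2 / δ ≤ (2 * (m:ℝ)^4 / δ) * ‖H‖^2 := by
      calc 2 * (Nmat H)^2 / δ ≤ 2 * ((m:ℝ)^2 * ‖H‖)^2 / δ := by gcongr
        _ = (2 * (m:ℝ)^4 / δ) * ‖H‖^2 := by ring
    rw [abs_le]
    constructor
    · have : 0 ≤ (2 * (m:ℝ)^4 / δ) * ‖H‖^2 := by positivity
      linarith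
    · linarith
  rw [Asymptotics.isLittleO_iff]
  intro c hc
  refine Metric.eventually_nhds_iff.2 ⟨c / (2 * (m:ℝ)^4 / δ + 1), by positivity, fun H hH => ?_⟩
  rw [dist_zero_right] at hH
  have hkey : ‖H‖ * (2 * (m:ℝ)^4 / δ + 1) < c := by
    rw [← lt_div_iff₀ (by positivity)]
    exact hH
  calc ‖lamMax (A + H) - lamMax A - (LinearMap.toContinuousLinearMap L₀) H‖
      ≤ (2 * (m:ℝ)^4 / δ) * ‖H‖^2 := herr H
    _ ≤ c * ‖H‖ := by nlinarith [norm_nonneg H, hkey, hC0, hc]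
end
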